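/- Let α_i, α_j, p_{i,2}, p_{j,1}, p_{j,2} ≥ 0 with α_j > 0 and p_{i,2} ≥ 0. Then log₂(1 + p_{j,1}/α_j) + log₂(1 + p_{j,2}/(p_{i,2} + p_{j,1} + α_j)) ≥ log₂(1 + (p_{j,1} + p_{j,2})/(p_{i,2} + α_j)), with equality if p_{i,2} = 0. -/

import Mathlib

open Real

theorem weak_user_sum_rate_ineq (αj pi2 pj1 pj2 : ℝ)
    (hαj : 0 < αj) (hpi2 : 0 ≤ pi2) (hpj1 : 0 ≤ pj1) (hpj2 : 0 ≤ pj2) :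
    logb 2 (1 + pj1 / αj) + logb 2 (1 + pj2 / (pi2 + pj1 + αj)) ≥
      logb 2 (1 + (pj1 + pj2) / (pi2 + αj)) ∧
    (pi2 = 0 →
      logb 2 (1 + pj1 / αj) + logb 2 (1 + pj2 / (pi2 + pj1 + αj)) =
        logb 2 (1 + (pj1 + pj2) / (pi2 + αj))) := by
  have hd1 : (0:ℝ) < pi2 + pj1 + αj := by linarith
  have hd2 : (0:ℝ) < pi2 + αj := by linarith
  have hA : (0:ℝ) < 1 + pj1 / αj := by positivity
  have hB : (0:ℝ) < 1 + pj2 / (pi2 + pj1 + αj) := by positivity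
  have hsum : logb 2 (1 + pj1 / αj) + logb 2 (1 + pj2 / (pi2 + pj1 + αj)) =
      logb 2 ((1 + pj1 / αj) * (1 + pj2 / (pi2 + pj1 + αj))) :=
    (Real.logb_mul hA.ne' hB.ne').symm
  constructor
  · rw [hsum]
    apply Real.logb_le_logb_of_le (by norm_num) (by positivity)
    have hpos : (0:ℝ) < (pi2 + αj) * (αj * (pi2 + pj1 + αj)) := by positivity
    have key : (1 + (pj1 + pj2) / (pi2 + αj)) * ((pi2 + αj) * (αj * (pi2 + pj1 + αj))) ≤
        ((1 + pj1 / αj) * (1 + pj2 / (pi2 + pj1 + αj))) * ((pi2 + αj) * (αj * (pi2 + pj1 + αj))) := by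
      field_simp
      nlinarith [mul_nonneg (mul_nonneg hpj1 hpi2) (by positivity : (0:ℝ) ≤ pi2 + pj1 + αj + pj2), mul_nonneg (mul_nonneg (mul_nonneg hpj1 hpi2)
        (by positivity : (0:ℝ) ≤ pi2 + pj1 + αj + pj2)) hpos.le]
    exact le_of_mul_le_mul_right key hpos
  · intro h
    subst h
    rw [hsum]
    congr 1
    field_simp
    ring
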